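/- Let f: 2^{[n]} → R be submodular and F its multilinear extension. If x ≤ y coordinatewise in [0,1]^n, then for every coordinate i, ∂F/∂x_i(x) ≥ ∂F/∂x_i(y). -/

import Mathlib

open Finset

noncomputable def Dval {n : ℕ} (E : Finset (Fin n)) (m : Finset (Fin n) → ℝ)
    (z : Fin n → ℝ) : ℝ :=
  ∑ T ∈ E.powerset, m T * ((∏ j ∈ T, z j) * ∏ j ∈ E \ T, (1 - z j))

lemma Dval_insert {n : ℕ} {E : Finset (Fin n)} {j : Fin n} (hj : j ∉ E)
    (m : Finset (Fin n) → ℝ) (z : Fin n → ℝ) :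
    Dval (insert j E) m z =
      z j * Dval E (fun T => m (insert j T)) z + (1 - z j) * Dval E m z := by
  unfold Dval
  rw [sum_powerset_insert hj]
  rw [Finset.mul_sum, Finset.mul_sum, add_comm]
  congr 1
  · refine Finset.sum_congr rfl fun T hT => ?_
    rw [mem_powerset] at hT
    have hjT : j ∉ T := fun h => hj (hT h)
    have hins : insert j E \ insert j T = E \ T := by
      ext k; simp only [mem_sdiff, mem_insert]
      constructor
      · rintro ⟨h1 | h1, h2⟩
        · exact absurd (Or.inl h1) h2
        · exact ⟨h1, fun hk => h2 (Or.inr hk)⟩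
      · rintro ⟨h1, h2⟩
        exact ⟨Or.inr h1, by rintro (rfl | hk); exact hj h1; exact h2 hk⟩
    rw [prod_insert hjT, hins]
    ring
  · refine Finset.sum_congr rfl fun T hT => ?_
    rw [mem_powerset] at hT
    have hjE : insert j E \ T = insert j (E \ T) := by
      ext k; simp only [mem_sdiff, mem_insert]
      constructor
      · rintro ⟨h1 | h1, h2⟩
        · exact Or.inl h1
        · exact Or.inr ⟨h1, h2⟩
      · rintro (rfl | ⟨h1, h2⟩)
        · exact ⟨Or.inl rfl, fun hk => hj (hT hk)⟩
        · exact ⟨Or.inr h1, h2⟩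
    have hjT : j ∉ E \ T := fun h => hj (mem_sdiff.mp h).1
    rw [hjE, prod_insert hjT]
    ring

lemma Dval_weight_nonneg {n : ℕ} {E T : Finset (Fin n)} {z : Fin n → ℝ}
    (hz : ∀ k, z k ∈ Set.Icc (0:ℝ) 1) :
    0 ≤ (∏ j ∈ T, z j) * ∏ j ∈ E \ T, (1 - z j) := by
  apply mul_nonneg
  · exact prod_nonneg fun k _ => (hz k).1
  · exact prod_nonneg fun k _ => by linarith [(hz k).2]

lemma Dval_mono_m {n : ℕ} {E : Finset (Fin n)} {m m' : Finset (Fin n) → ℝ}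
    {z : Fin n → ℝ} (hz : ∀ k, z k ∈ Set.Icc (0:ℝ) 1)
    (h : ∀ T, m' T ≤ m T) : Dval E m' z ≤ Dval E m z := by
  apply Finset.sum_le_sum
  intro T _
  exact mul_le_mul_of_nonneg_right (h T) (Dval_weight_nonneg hz)

lemma Dval_anti {n : ℕ} (E : Finset (Fin n)) (m : Finset (Fin n) → ℝ)
    (hm : ∀ j ∈ E, ∀ T, m (insert j T) ≤ m T)
    {z w : Fin n → ℝ} (hz : ∀ k, z k ∈ Set.Icc (0:ℝ) 1)
    (hw : ∀ k, w k ∈ Set.Icc (0:ℝ) 1) (hzw : z ≤ w) :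
    Dval E m w ≤ Dval E m z := by
  induction E using Finset.induction_on generalizing m with
  | empty => simp [Dval]
  | @insert j E hj ih =>
    rw [Dval_insert hj, Dval_insert hj]
    have ha : Dval E (fun T => m (insert j T)) w ≤ Dval E (fun T => m (insert j T)) z := by
      apply ih
      intro k hk T
      show m (insert j (insert k T)) ≤ m (insert j T)
      rw [Finset.insert_comm j k]
      exact hm k (mem_insert_of_mem hk) (insert j T)
    have hb : Dval E m w ≤ Dval E m z :=
      ih m (fun k hk T => hm k (mem_insert_of_mem hk) T)
    have hab : Dval E (fun T => m (insert j T)) z ≤ Dval E m z :=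
      Dval_mono_m hz (fun T => hm j (mem_insert_self j E) T)
    have h1 := (hw j).1; have h2 := (hw j).2
    have h3 := (hz j).1; have h4 := hzw j
    nlinarith [mul_le_mul_of_nonneg_left ha h1,
      mul_le_mul_of_nonneg_left hb (by linarith : (0:ℝ) ≤ 1 - w j)]

lemma prod_ite_subset {n : ℕ} {E T : Finset (Fin n)} (hT : T ⊆ E)
    (a b : Fin n → ℝ) :
    (∏ k ∈ E, (if k ∈ T then a k else b k)) =
      (∏ k ∈ T, a k) * ∏ k ∈ E \ T, b k := by
  rw [← Finset.union_sdiff_of_subset hT,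
    Finset.prod_union (disjoint_sdiff), Finset.union_sdiff_of_subset hT]
  congr 1
  · exact Finset.prod_congr rfl fun k hk => if_pos hk
  · exact Finset.prod_congr rfl fun k hk => if_neg (mem_sdiff.mp hk).2

noncomputable def projL {n : ℕ} (j : Fin n) : (Fin n → ℝ) →L[ℝ] ℝ :=
  ContinuousLinearMap.proj j

lemma fderiv_eq_Dval {n : ℕ} (f : Finset (Fin n) → ℝ)
    (F : (Fin n → ℝ) → ℝ)
    (hF : ∀ x, F x = ∑ S : Finset (Fin n),
      f S * ((∏ i ∈ S, x i) * ∏ i ∈ Sᶜ, (1 - x i)))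
    (z : Fin n → ℝ) (i : Fin n) :
    fderiv ℝ F z (Pi.single i 1) =
      Dval (univ.erase i) (fun T => f (insert i T) - f T) z := by
  have hFfun : F = fun x => ∑ S : Finset (Fin n),
      f S * ((∏ j ∈ S, x j) * ∏ j ∈ Sᶜ, (1 - x j)) := funext hF
  set g' : Finset (Fin n) → Fin n → ((Fin n → ℝ) →L[ℝ] ℝ) := fun S j =>
    if j ∈ S then projL j else -projL j with hg'
  have hprod : ∀ S : Finset (Fin n), HasFDerivAt
      (fun x : Fin n → ℝ => ∏ j ∈ (univ : Finset (Fin n)),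
        (if j ∈ S then x j else 1 - x j))
      (∑ j ∈ (univ : Finset (Fin n)),
        (∏ k ∈ univ.erase j, (if k ∈ S then z k else 1 - z k)) • g' S j) z := by
    intro S
    apply HasFDerivAt.finset_prod
    intro j _
    by_cases hj : j ∈ S
    · simp only [hg', if_pos hj]
      exact (projL j).hasFDerivAt
    · simp only [hg', if_neg hj]
      have h0 : HasFDerivAt (fun x : Fin n → ℝ => 1 - x j) (-projL j) z := by
        have := (hasFDerivAt_const (1:ℝ) z).sub (projL j).hasFDerivAt
        rw [zero_sub] at this
        exact this
      exact h0
  have hgfun : ∀ (S : Finset (Fin n)) (x : Fin n → ℝ),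
      (∏ j ∈ (univ : Finset (Fin n)), (if j ∈ S then x j else 1 - x j)) =
        (∏ j ∈ S, x j) * ∏ j ∈ Sᶜ, (1 - x j) := by
    intro S x
    rw [prod_ite_subset (subset_univ S)]
    simp [Finset.compl_eq_univ_sdiff]
  have hder : HasFDerivAt F
      (∑ S : Finset (Fin n), f S • (∑ j ∈ (univ : Finset (Fin n)),
        (∏ k ∈ univ.erase j, (if k ∈ S then z k else 1 - z k)) • g' S j)) z := by
    rw [hFfun]
    refine HasFDerivAt.fun_sum (fun S _ => ?_)
    have hfe : (fun x : Fin n → ℝ => f S * ((∏ j ∈ S, x j) * ∏ j ∈ Sᶜ, (1 - x j)))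
        = fun x : Fin n → ℝ => f S * ∏ j ∈ (univ : Finset (Fin n)),
            (if j ∈ S then x j else 1 - x j) := by
      funext x; rw [hgfun]
    rw [hfe]
    exact (hprod S).const_mul (f S)
  rw [hder.fderiv]
  rw [ContinuousLinearMap.sum_apply]
  have heval : ∀ S : Finset (Fin n),
      (f S • (∑ j ∈ (univ : Finset (Fin n)),
        (∏ k ∈ univ.erase j, (if k ∈ S then z k else 1 - z k)) • g' S j)) (Pi.single i 1)
      = f S * ((∏ k ∈ univ.erase i, (if k ∈ S then z k else 1 - z k))
          * (if i ∈ S then 1 else -1)) := by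
    intro S
    rw [ContinuousLinearMap.smul_apply, ContinuousLinearMap.sum_apply]
    have hz : ∀ j ∈ (univ : Finset (Fin n)), j ≠ i →
        ((∏ k ∈ univ.erase j, (if k ∈ S then z k else 1 - z k)) • g' S j)
          (Pi.single i 1) = 0 := by
      intro j _ hji
      rw [ContinuousLinearMap.smul_apply]
      have hz0 : g' S j (Pi.single i 1) = 0 := by
        simp only [hg']
        split <;> simp [projL, Pi.single_apply, hji.symm, Ne.symm hji]
      rw [hz0, smul_zero]
    rw [Finset.sum_eq_single i (fun j hj hji => hz j hj hji) (by simp)]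
    have hi1 : g' S i (Pi.single i 1) = if i ∈ S then 1 else -1 := by
      simp only [hg']
      split <;> simp [projL]
    rw [ContinuousLinearMap.smul_apply, hi1]
    simp [smul_eq_mul, mul_assoc]
  rw [Finset.sum_congr rfl (fun S _ => heval S)]
  rw [show ((univ : Finset (Finset (Fin n)))) = (insert i ((univ : Finset (Fin n)).erase i)).powerset from by
    rw [insert_erase (mem_univ i), powerset_univ]]
  rw [sum_powerset_insert (notMem_erase i univ)]
  unfold Dval
  rw [← Finset.sum_add_distrib]
  refine Finset.sum_congr rfl fun T hT => ?_
  rw [mem_powerset] at hT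
  have hiT : i ∉ T := fun h => (notMem_erase i univ) (hT h)
  have h1 : (∏ k ∈ univ.erase i, (if k ∈ T then z k else 1 - z k))
      = (∏ j ∈ T, z j) * ∏ j ∈ univ.erase i \ T, (1 - z j) :=
    prod_ite_subset hT _ _
  have h2 : (∏ k ∈ univ.erase i, (if k ∈ insert i T then z k else 1 - z k))
      = ∏ k ∈ univ.erase i, (if k ∈ T then z k else 1 - z k) := by
    refine Finset.prod_congr rfl fun k hk => ?_
    have hk' : k ≠ i := (mem_erase.mp hk).1
    simp [mem_insert, hk']
  rw [if_neg hiT, if_pos (mem_insert_self i T), h2, h1]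
  ring

theorem stmt_11 {n : ℕ} (f : Finset (Fin n) → ℝ)
    (hsub : ∀ A B, f (A ∪ B) + f (A ∩ B) ≤ f A + f B)
    (F : (Fin n → ℝ) → ℝ)
    (hF : ∀ x, F x = ∑ S : Finset (Fin n),
      f S * ((∏ i ∈ S, x i) * ∏ i ∈ Sᶜ, (1 - x i)))
    (x y : Fin n → ℝ) (hx : ∀ k, x k ∈ Set.Icc (0:ℝ) 1)
    (hy : ∀ k, y k ∈ Set.Icc (0:ℝ) 1) (hxy : x ≤ y) (i : Fin n) :
    fderiv ℝ F y (Pi.single i 1) ≤ fderiv ℝ F x (Pi.single i 1) := by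
  rw [fderiv_eq_Dval f F hF x i, fderiv_eq_Dval f F hF y i]
  apply Dval_anti
  · intro j hj T
    have hji : j ≠ i := (mem_erase.mp hj).1
    by_cases hjT : j ∈ T
    · rw [insert_eq_self.mpr hjT]
    · by_cases hiT : i ∈ T
      · rw [insert_eq_self.mpr hiT, insert_eq_self.mpr (mem_insert_of_mem hiT)]
        simp
      · have h := hsub (insert i T) (insert j T)
        have hu : insert i T ∪ insert j T = insert i (insert j T) := by
          ext k; simp [mem_insert, mem_union]; tauto
        have hi : insert i T ∩ insert j T = T := by
          ext k
          simp only [mem_inter, mem_insert]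
          constructor
          · rintro ⟨h1 | h1, h2 | h2⟩
            · exact absurd (h1.symm.trans h2) (Ne.symm hji)
            · exact h2
            · exact h1
            · exact h1
          · intro hk; exact ⟨Or.inr hk, Or.inr hk⟩
        rw [hu, hi] at h
        linarith
  · exact hx
  · exact hy
  · exact hxy
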